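/- For all integers j and all t ≥ 0: δ(j, 2t) = δ(j, t) and δ(j, 2t+1) = (1/2)δ(j-1, t) + (1/2)δ(j+1, t+1). -/

import Mathlib

open Filter
open scoped Classical

/-- `HasDensity' A d` : the set `A ⊆ ℕ` has asymptotic density `d`. -/
def HasDensity' (A : Set ℕ) (d : ℝ) : Prop :=
  Tendsto
    (fun N : ℕ =>
      (((Finset.range N).filter (fun n => n ∈ A)).card : ℝ) / N)
    atTop (nhds d)

/-- `DeltaSet j t = {n : s(n+t) - s(n) = j}` with `s` the binary sum of digits. -/
def DeltaSet (j : ℤ) (t : ℕ) : Set ℕ :=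
  {n : ℕ | ((Nat.digits 2 (n + t)).sum : ℤ) - ((Nat.digits 2 n).sum : ℤ) = j}

lemma sum_digits_two_mul (k : ℕ) :
    (Nat.digits 2 (2 * k)).sum = (Nat.digits 2 k).sum := by
  rcases Nat.eq_zero_or_pos k with rfl | hk
  · simp
  · rw [Nat.digits_def' (by norm_num : 1 < 2) (by omega)]
    simp [Nat.mul_mod_right, Nat.mul_div_cancel_left]

lemma sum_digits_two_mul_add_one (k : ℕ) :
    (Nat.digits 2 (2 * k + 1)).sum = (Nat.digits 2 k).sum + 1 := by
  rw [Nat.digits_def' (by norm_num : 1 < 2) (by omega)]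
  have h1 : (2 * k + 1) % 2 = 1 := by omega
  have h2 : (2 * k + 1) / 2 = k := by omega
  rw [h1, h2]
  simp [Nat.add_comm]

/-- Counting lemma: split `range N` into evens and odds. -/
lemma count_split (P A1 A2 : ℕ → Prop)
    (h0 : ∀ m, P (2 * m) ↔ A1 m) (h1 : ∀ m, P (2 * m + 1) ↔ A2 m) :
    ∀ N : ℕ, ((Finset.range N).filter P).card =
      ((Finset.range ((N + 1) / 2)).filter A1).card +
      ((Finset.range (N / 2)).filter A2).card := by
  have step : ∀ (Q : ℕ → Prop) (M : ℕ),
      ((Finset.range (M + 1)).filter Q).card =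
        ((Finset.range M).filter Q).card + (if Q M then 1 else 0) := by
    intro Q M
    rw [Finset.range_add_one, Finset.filter_insert]
    split_ifs with h
    · rw [Finset.card_insert_of_notMem (by simp)]
    · simp
  intro N
  induction N with
  | zero => simp
  | succ N ih =>
    rw [step P N, ih]
    rcases Nat.even_or_odd N with ⟨m, hm⟩ | ⟨m, hm⟩
    · subst hm
      have e1 : (m + m + 1 + 1) / 2 = m + 1 := by omega
      have e2 : (m + m + 1) / 2 = m := by omega
      have e3 : (m + m) / 2 = m := by omega
      rw [e1, e2, e3, step A1 m]
      have hP : P (m + m) ↔ A1 m := by rw [← two_mul]; exact h0 m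
      simp only [hP]
      omega
    · subst hm
      have e1 : (2 * m + 1 + 1 + 1) / 2 = m + 1 := by omega
      have e2 : (2 * m + 1 + 1) / 2 = m + 1 := by omega
      have e4 : (2 * m + 1) / 2 = m := by omega
      rw [e1, e2, e4, step A2 m]
      simp only [h1 m]
      omega

lemma tendsto_ratio_half (g : ℕ → ℕ) (hg : ∀ N, N ≤ 2 * g N + 1 ∧ 2 * g N ≤ N + 1) :
    Tendsto (fun N : ℕ => ((g N : ℝ)) / N) atTop (nhds (1 / 2)) := by
  have h0 : Tendsto (fun n : ℕ => (1 : ℝ) / n) atTop (nhds 0) :=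
    tendsto_one_div_atTop_nhds_zero_nat
  have hlo : Tendsto (fun N : ℕ => (1 : ℝ) / 2 - (1 / 2) * (1 / N)) atTop
      (nhds (1 / 2)) := by
    have := (h0.const_mul (1 / 2 : ℝ)).const_sub (1 / 2 : ℝ)
    simpa using this
  have hhi : Tendsto (fun N : ℕ => (1 : ℝ) / 2 + (1 / 2) * (1 / N)) atTop
      (nhds (1 / 2)) := by
    have := (h0.const_mul (1 / 2 : ℝ)).const_add (1 / 2 : ℝ)
    simpa using this
  apply tendsto_of_tendsto_of_tendsto_of_le_of_le' hlo hhi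
  · filter_upwards [eventually_ge_atTop 1] with N hN
    have hN' : (0 : ℝ) < N := by exact_mod_cast hN
    have hb : (N : ℝ) ≤ 2 * (g N : ℝ) + 1 := by exact_mod_cast (hg N).1
    rw [le_div_iff₀ hN']
    have heq : ((1 : ℝ) / 2 - 1 / 2 * (1 / N)) * N = N / 2 - 1 / 2 := by
      field_simp
    rw [heq]
    linarith
  · filter_upwards [eventually_ge_atTop 1] with N hN
    have hN' : (0 : ℝ) < N := by exact_mod_cast hN
    have hb : 2 * (g N : ℝ) ≤ (N : ℝ) + 1 := by exact_mod_cast (hg N).2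
    rw [div_le_iff₀ hN']
    have heq : ((1 : ℝ) / 2 + 1 / 2 * (1 / N)) * N = N / 2 + 1 / 2 := by
      field_simp
    rw [heq]
    linarith

lemma tendsto_half_count (A : Set ℕ) (d : ℝ) (h : HasDensity' A d)
    (g : ℕ → ℕ) (hg : ∀ N, N ≤ 2 * g N + 1 ∧ 2 * g N ≤ N + 1) :
    Tendsto (fun N : ℕ =>
      (((Finset.range (g N)).filter (fun n => n ∈ A)).card : ℝ) / N)
      atTop (nhds (d / 2)) := by
  have hgtop : Tendsto g atTop atTop := by
    rw [tendsto_atTop_atTop]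
    intro b
    exact ⟨2 * b + 1, fun a ha => by have := (hg a).1; omega⟩
  have h1 : Tendsto (fun N : ℕ =>
      (((Finset.range (g N)).filter (fun n => n ∈ A)).card : ℝ) / (g N))
      atTop (nhds d) := h.comp hgtop
  have h2 := tendsto_ratio_half g hg
  have h3 := h1.mul h2
  have heq : ∀ᶠ N : ℕ in atTop,
      (((Finset.range (g N)).filter (fun n => n ∈ A)).card : ℝ) / (g N) *
        ((g N : ℝ) / N) =
      (((Finset.range (g N)).filter (fun n => n ∈ A)).card : ℝ) / N := by
    filter_upwards [hgtop.eventually (eventually_ge_atTop 1),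
      eventually_ge_atTop 1] with N hgN hN
    have hg0 : (g N : ℝ) ≠ 0 := by
      have : (0 : ℕ) < g N := hgN
      exact_mod_cast this.ne'
    have hN0 : (N : ℝ) ≠ 0 := by
      have : (0 : ℕ) < N := hN
      exact_mod_cast this.ne'
    field_simp
  have := h3.congr' heq
  convert this using 2
  ring

/-- `δ(j,2t) = δ(j,t)` and `δ(j,2t+1) = δ(j-1,t)/2 + δ(j+1,t+1)/2`. -/
theorem cusick_stmt3 (j : ℤ) (t : ℕ) :
    (∀ d : ℝ, HasDensity' (DeltaSet j t) d → HasDensity' (DeltaSet j (2 * t)) d) ∧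
    (∀ d₁ d₂ : ℝ, HasDensity' (DeltaSet (j - 1) t) d₁ →
      HasDensity' (DeltaSet (j + 1) (t + 1)) d₂ →
      HasDensity' (DeltaSet j (2 * t + 1)) (d₁ / 2 + d₂ / 2)) := by
  constructor
  · intro d hd
    have key := count_split (fun n => n ∈ DeltaSet j (2 * t))
      (fun m => m ∈ DeltaSet j t) (fun m => m ∈ DeltaSet j t)
      (fun m => by
        simp only [DeltaSet, Set.mem_setOf_eq]
        have e : 2 * m + 2 * t = 2 * (m + t) := by ring
        rw [e, sum_digits_two_mul, sum_digits_two_mul])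
      (fun m => by
        simp only [DeltaSet, Set.mem_setOf_eq]
        have e : 2 * m + 1 + 2 * t = 2 * (m + t) + 1 := by ring
        rw [e, sum_digits_two_mul_add_one, sum_digits_two_mul_add_one]
        push_cast
        constructor <;> intro h <;> linarith)
    have t1 := tendsto_half_count (DeltaSet j t) d hd
      (fun N => (N + 1) / 2)
      (fun N => by change N ≤ 2 * ((N + 1) / 2) + 1 ∧ 2 * ((N + 1) / 2) ≤ N + 1; omega)
    have t2 := tendsto_half_count (DeltaSet j t) d hd
      (fun N => N / 2)
      (fun N => by change N ≤ 2 * (N / 2) + 1 ∧ 2 * (N / 2) ≤ N + 1; omega)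
    have := t1.add t2
    unfold HasDensity'
    have heq : (fun N : ℕ =>
        (((Finset.range N).filter (fun n => n ∈ DeltaSet j (2 * t))).card : ℝ) / N)
        = fun N : ℕ =>
        (((Finset.range ((N + 1) / 2)).filter (fun n => n ∈ DeltaSet j t)).card : ℝ) / N +
        (((Finset.range (N / 2)).filter (fun n => n ∈ DeltaSet j t)).card : ℝ) / N := by
      funext N
      rw [key N]
      push_cast
      ring
    rw [heq]
    convert this using 2
    ring
  · intro d₁ d₂ hd₁ hd₂
    have key := count_split (fun n => n ∈ DeltaSet j (2 * t + 1))
      (fun m => m ∈ DeltaSet (j - 1) t) (fun m => m ∈ DeltaSet (j + 1) (t + 1))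
      (fun m => by
        simp only [DeltaSet, Set.mem_setOf_eq]
        have e : 2 * m + (2 * t + 1) = 2 * (m + t) + 1 := by ring
        rw [e, sum_digits_two_mul_add_one, sum_digits_two_mul]
        push_cast
        constructor <;> intro h <;> linarith)
      (fun m => by
        simp only [DeltaSet, Set.mem_setOf_eq]
        have e : 2 * m + 1 + (2 * t + 1) = 2 * (m + (t + 1)) := by ring
        rw [e, sum_digits_two_mul, sum_digits_two_mul_add_one]
        push_cast
        constructor <;> intro h <;> linarith)
    have t1 := tendsto_half_count (DeltaSet (j - 1) t) d₁ hd₁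
      (fun N => (N + 1) / 2)
      (fun N => by change N ≤ 2 * ((N + 1) / 2) + 1 ∧ 2 * ((N + 1) / 2) ≤ N + 1; omega)
    have t2 := tendsto_half_count (DeltaSet (j + 1) (t + 1)) d₂ hd₂
      (fun N => N / 2)
      (fun N => by change N ≤ 2 * (N / 2) + 1 ∧ 2 * (N / 2) ≤ N + 1; omega)
    have := t1.add t2
    unfold HasDensity'
    have heq : (fun N : ℕ =>
        (((Finset.range N).filter (fun n => n ∈ DeltaSet j (2 * t + 1))).card : ℝ) / N)
        = fun N : ℕ =>
        (((Finset.range ((N + 1) / 2)).filter (fun n => n ∈ DeltaSet (j - 1) t)).card : ℝ) / N +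
        (((Finset.range (N / 2)).filter (fun n => n ∈ DeltaSet (j + 1) (t + 1))).card : ℝ) / N := by
      funext N
      rw [key N]
      push_cast
      ring
    rw [heq]
    exact this
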